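/- If f : [−1,1] → ℝ extends to a bounded analytic function on the Bernstein ρ-ellipse E_ρ (ρ > 1) with |f| ≤ M there, then its Chebyshev coefficients satisfy |a_k| ≤ 2M·ρ^{−k} for all k ≥ 1. -/

import Mathlib

open Polynomial Real Complex

/-- The (open) Bernstein ρ-ellipse: the image of the annulus
`ρ⁻¹ < |z| < ρ` under the Joukowski map `z ↦ (z + z⁻¹)/2`. -/
def bernsteinEllipse (ρ : ℝ) : Set ℂ :=
  (fun z : ℂ => (z + z⁻¹) / 2) '' {z : ℂ | ρ⁻¹ < ‖z‖ ∧ ‖z‖ < ρ}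

lemma cos_image_Ioo : Real.cos '' Set.Ioo 0 π = Set.Ioo (-1 : ℝ) 1 := by
  ext x
  constructor
  · rintro ⟨θ, ⟨h0, hπ⟩, rfl⟩
    constructor
    · have := Real.strictAntiOn_cos ⟨h0.le, hπ.le⟩ ⟨Real.pi_pos.le, le_rfl⟩ hπ
      simpa using this
    · have := Real.strictAntiOn_cos ⟨le_rfl, Real.pi_pos.le⟩ ⟨h0.le, hπ.le⟩ h0
      simpa using this
  · rintro ⟨h1, h2⟩
    refine ⟨Real.arccos x, ⟨Real.arccos_pos.2 h2, ?_⟩, Real.cos_arccos h1.le h2.le⟩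
    exact lt_of_le_of_ne (Real.arccos_le_pi x) (by rw [Ne, Real.arccos_eq_pi]; linarith)

lemma cov (h : ℝ → ℝ) :
    (∫ x in (-1:ℝ)..1, h x / Real.sqrt (1 - x ^ 2)) = ∫ θ in (0:ℝ)..π, h (Real.cos θ) := by
  rw [intervalIntegral.integral_of_le (by norm_num : (-1:ℝ) ≤ 1),
      intervalIntegral.integral_of_le Real.pi_pos.le,
      MeasureTheory.integral_Ioc_eq_integral_Ioo, MeasureTheory.integral_Ioc_eq_integral_Ioo,
      ← cos_image_Ioo,
      MeasureTheory.integral_image_eq_integral_abs_deriv_smul measurableSet_Ioo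
        (fun θ _ => (Real.hasDerivAt_cos θ).hasDerivWithinAt)
        (Real.injOn_cos.mono Set.Ioo_subset_Icc_self)]
  refine MeasureTheory.setIntegral_congr_fun measurableSet_Ioo (fun θ hθ => ?_)
  have hs : 0 < Real.sin θ := Real.sin_pos_of_pos_of_lt_pi hθ.1 hθ.2
  have h1 : Real.sqrt (1 - Real.cos θ ^ 2) = Real.sin θ := by
    rw [show (1 : ℝ) - Real.cos θ ^ 2 = Real.sin θ ^ 2 by nlinarith [Real.sin_sq_add_cos_sq θ]]
    exact Real.sqrt_sq hs.le
  rw [smul_eq_mul, abs_neg, abs_of_pos hs, h1]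
  field_simp

lemma joukowski_exp (θ : ℝ) :
    ((Complex.exp (θ * I) + (Complex.exp (θ * I))⁻¹) / 2) = ((Real.cos θ : ℝ) : ℂ) := by
  rw [← Complex.exp_neg, Complex.ofReal_cos, ← neg_mul]
  rw [show Complex.exp (↑θ * I) + Complex.exp (-↑θ * I) = 2 * Complex.cos ↑θ from
    (Complex.two_cos (x := (θ : ℂ))).symm]
  ring

/-- Bernstein's theorem: if `f` is analytic and bounded by `M` on the
Bernstein ρ-ellipse (`ρ > 1`) and is real-valued on `[−1,1]`, then its
Chebyshev coefficients `a_k = (2/π)∫_{−1}^1 f(x)T_k(x)/√(1−x²) dx` satisfy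
`|a_k| ≤ 2M·ρ^{−k}` for all `k ≥ 1`. -/
theorem stmt13 (ρ M : ℝ) (hρ : 1 < ρ)
    (f : ℂ → ℂ)
    (hf : DifferentiableOn ℂ f (bernsteinEllipse ρ))
    (hM : ∀ z ∈ bernsteinEllipse ρ, ‖f z‖ ≤ M)
    (hreal : ∀ x : ℝ, x ∈ Set.Icc (-1 : ℝ) 1 → (f x).im = 0)
    (a : ℕ → ℝ)
    (ha : ∀ k : ℕ, a k = (2 / π) *
      ∫ x in (-1 : ℝ)..1,
        (f x).re * (Polynomial.Chebyshev.T ℝ k).eval x / Real.sqrt (1 - x ^ 2)) :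
    ∀ k : ℕ, 1 ≤ k → |a k| ≤ 2 * M / ρ ^ k := by
  intro k hk
  have hρ0 : (0:ℝ) < ρ := lt_trans one_pos hρ
  have hρinv : ρ⁻¹ < 1 := inv_lt_one_of_one_lt₀ hρ
  set A : Set ℂ := {z : ℂ | ρ⁻¹ < ‖z‖ ∧ ‖z‖ < ρ} with hA
  have hAopen : IsOpen A := by
    have : A = (fun z : ℂ => ‖z‖) ⁻¹' (Set.Ioo ρ⁻¹ ρ) := rfl
    rw [this]; exact isOpen_Ioo.preimage continuous_norm
  have hA0 : ∀ z ∈ A, z ≠ 0 := by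
    intro z hz h0
    rw [h0] at hz
    simp only [hA, Set.mem_setOf_eq, map_zero, norm_zero] at hz
    exact absurd hz.1 (not_lt.2 (inv_nonneg.2 hρ0.le))
  have hJkA : ∀ z ∈ A, (z + z⁻¹) / 2 ∈ bernsteinEllipse ρ := fun z hz => ⟨z, hz, rfl⟩
  have hfJ : DifferentiableOn ℂ (fun z => f ((z + z⁻¹) / 2)) A := by
    refine DifferentiableOn.comp hf ?_ hJkA
    intro z hz
    exact ((differentiableAt_id.add (differentiableAt_inv (hA0 z hz))).div_const
      2).differentiableWithinAt
  set g : ℂ → ℂ := fun z => f ((z + z⁻¹) / 2) * z ^ (-(k+1:ℤ)) with hg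
  have hgdiff : ∀ z ∈ A, DifferentiableAt ℂ g z := by
    intro z hz
    exact (hfJ.differentiableAt (hAopen.mem_nhds hz)).mul
      (differentiableAt_zpow.2 (Or.inl (hA0 z hz)))
  have hmem1 : ∀ θ : ℝ, circleMap 0 1 θ ∈ A := by
    intro θ
    constructor <;> simp [norm_circleMap_zero] <;> linarith
  have hcirc : ∀ θ : ℝ, circleMap 0 1 θ = Complex.exp (θ * I) := by
    intro θ; simp [circleMap]
  have hFc : Continuous (fun θ : ℝ => f ((Real.cos θ : ℝ) : ℂ)) := by
    have h1 : Continuous (fun θ : ℝ => f ((circleMap 0 1 θ + (circleMap 0 1 θ)⁻¹) / 2)) :=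
      hfJ.continuousOn.comp_continuous (continuous_circleMap 0 1) hmem1
    have h2 : (fun θ : ℝ => f ((Real.cos θ : ℝ) : ℂ))
        = fun θ : ℝ => f ((circleMap 0 1 θ + (circleMap 0 1 θ)⁻¹) / 2) := by
      funext θ; rw [hcirc θ, joukowski_exp θ]
    rw [h2]; exact h1
  -- the main players
  set Fm : ℝ → ℂ := fun θ => f ((Real.cos θ : ℝ) : ℂ)
      * Complex.exp (-(((k : ℝ) * θ : ℝ) : ℂ) * I) with hFm
  set Fp : ℝ → ℂ := fun θ => f ((Real.cos θ : ℝ) : ℂ)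
      * Complex.exp ((((k : ℝ) * θ : ℝ) : ℂ) * I) with hFp
  set G : ℝ → ℂ := fun θ => f ((Real.cos θ : ℝ) : ℂ)
      * ((Real.cos ((k : ℝ) * θ) : ℝ) : ℂ) with hG
  set J : ℂ := ∫ θ in (0:ℝ)..π, G θ with hJ
  have hFmc : Continuous Fm := hFc.mul (Complex.continuous_exp.comp
    (((Complex.continuous_ofReal.comp (continuous_const.mul continuous_id)).neg).mul
      continuous_const))
  have hFpc : Continuous Fp := hFc.mul (Complex.continuous_exp.comp
    ((Complex.continuous_ofReal.comp (continuous_const.mul continuous_id)).mul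
      continuous_const))
  have hGc : Continuous G := hFc.mul (Complex.continuous_ofReal.comp
    (Real.continuous_cos.comp (continuous_const.mul continuous_id)))
  -- circle integral at radius 1
  have hI1 : (∮ z in C(0, 1), g z) = I * ∫ θ in (0:ℝ)..(2*π), Fm θ := by
    rw [circleIntegral, ← intervalIntegral.integral_const_mul]
    refine intervalIntegral.integral_congr (fun θ _ => ?_)
    rw [deriv_circleMap, hcirc θ, smul_eq_mul, hg]
    simp only
    rw [joukowski_exp θ]
    have h1 : Complex.exp (↑θ * I) ^ (-(k+1:ℤ)) = Complex.exp (-((k+1:ℕ) : ℂ) * (↑θ * I)) := by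
      rw [show (-(k+1:ℤ)) = -((k+1:ℕ) : ℤ) by push_cast; ring, zpow_neg, zpow_natCast,
        ← Complex.exp_nat_mul, ← Complex.exp_neg, neg_mul]
    have h2 : Complex.exp (↑θ * I) * Complex.exp (-((k+1:ℕ) : ℂ) * (↑θ * I))
        = Complex.exp (-(((k : ℝ) * θ : ℝ) : ℂ) * I) := by
      rw [← Complex.exp_add]; congr 1; push_cast; ring
    rw [h1, hFm]
    simp only
    linear_combination (I * f ((Real.cos θ : ℝ) : ℂ)) * h2
  -- symmetry: ∫ Fm = ∫ Fp on [0, 2π]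
  have hsym : (∫ θ in (0:ℝ)..(2*π), Fm θ) = ∫ θ in (0:ℝ)..(2*π), Fp θ := by
    have h := intervalIntegral.integral_comp_sub_left (a := (0:ℝ)) (b := 2*π) Fm (2*π)
    rw [sub_self, sub_zero] at h
    rw [← h]
    refine intervalIntegral.integral_congr (fun θ _ => ?_)
    rw [hFm, hFp]
    simp only
    rw [Real.cos_two_pi_sub]
    congr 1
    have hone : Complex.exp ((((-(k:ℤ)) : ℤ) : ℂ) * (2 * (π:ℝ) * I)) = 1 :=
      Complex.exp_int_mul_two_pi_mul_I (-(k:ℤ))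
    rw [show (-(((k : ℝ) * (2*π - θ) : ℝ) : ℂ) * I)
        = (((k : ℝ) * θ : ℝ) : ℂ) * I + (((-(k:ℤ)) : ℤ) : ℂ) * (2 * (π:ℝ) * I) by
        push_cast; ring,
      Complex.exp_add, hone, mul_one]
  -- ∫ Fm = ∫ G on [0,2π]
  have hKcos : (∫ θ in (0:ℝ)..(2*π), Fm θ) = ∫ θ in (0:ℝ)..(2*π), G θ := by
    have h2 : (∫ θ in (0:ℝ)..(2*π), Fm θ)
        = ((∫ θ in (0:ℝ)..(2*π), Fm θ) + ∫ θ in (0:ℝ)..(2*π), Fp θ) / 2 := by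
      rw [← hsym]; ring
    rw [h2, ← intervalIntegral.integral_add (hFmc.intervalIntegrable _ _)
      (hFpc.intervalIntegrable _ _), ← intervalIntegral.integral_div]
    refine intervalIntegral.integral_congr (fun θ _ => ?_)
    rw [hFm, hFp, hG]
    simp only
    have h2c := Complex.two_cos (x := (((k : ℝ) * θ : ℝ) : ℂ))
    rw [← Complex.ofReal_cos] at h2c
    linear_combination (-(f ((Real.cos θ : ℝ) : ℂ)) / 2) * h2c
  -- split [0,2π]
  have hGsplit : (∫ θ in (0:ℝ)..(2*π), G θ) = 2 * J := by
    have hadj : (∫ θ in (0:ℝ)..π, G θ) + (∫ θ in π..(2*π), G θ)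
        = ∫ θ in (0:ℝ)..(2*π), G θ :=
      intervalIntegral.integral_add_adjacent_intervals (hGc.intervalIntegrable _ _)
        (hGc.intervalIntegrable _ _)
    have h2 : (∫ θ in π..(2*π), G θ) = J := by
      have h := intervalIntegral.integral_comp_sub_left (a := (0:ℝ)) (b := π) G (2*π)
      rw [show 2*π - π = π by ring, sub_zero] at h
      rw [← h, hJ]
      refine intervalIntegral.integral_congr (fun θ _ => ?_)
      rw [hG]
      simp only
      rw [Real.cos_two_pi_sub,
        show (k : ℝ) * (2*π - θ) = -((k:ℝ) * θ) + (k:ℤ) * (2*π) by push_cast; ring,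
        Real.cos_add_int_mul_two_pi, Real.cos_neg]
    rw [← hadj, h2, hJ]; ring
  -- a k = (2/π) * J.re
  have hak : a k = (2/π) * J.re := by
    rw [ha k]
    congr 1
    have hcov := cov (fun x => (f ((x:ℝ):ℂ)).re * ((Polynomial.Chebyshev.T ℝ k).eval x))
    rw [hcov]
    have hre : J.re = ∫ θ in (0:ℝ)..π, (G θ).re := by
      have h : (∫ θ in (0:ℝ)..π, Complex.reCLM (G θ))
          = Complex.reCLM (∫ θ in (0:ℝ)..π, G θ) :=
        Complex.reCLM.intervalIntegral_comp_comm (hGc.intervalIntegrable 0 π)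
      simp only [Complex.reCLM_apply] at h
      rw [hJ, ← h]
    rw [hre]
    refine intervalIntegral.integral_congr (fun θ _ => ?_)
    rw [hG]
    simp only
    rw [Polynomial.Chebyshev.T_real_cos, Complex.mul_re, Complex.ofReal_re,
      Complex.ofReal_im, mul_zero, sub_zero, Int.cast_natCast]
  -- key bound for every radius r ∈ (1, ρ)
  have key : ∀ r ∈ Set.Ioo (1:ℝ) ρ, |a k| ≤ 2 * M / r ^ k := by
    intro r hr
    have hr0 : (0:ℝ) < r := lt_trans one_pos hr.1
    have hsub : Metric.closedBall (0:ℂ) r \ Metric.ball 0 1 ⊆ A := by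
      rintro z ⟨hz1, hz2⟩
      rw [Metric.mem_closedBall, dist_zero_right] at hz1
      rw [Metric.mem_ball, dist_zero_right, not_lt] at hz2
      constructor
      · exact lt_of_lt_of_le hρinv (by simpa using hz2)
      · exact lt_of_le_of_lt (by simpa using hz1) hr.2
    have heq : (∮ z in C(0, r), g z) = ∮ z in C(0, 1), g z := by
      refine Complex.circleIntegral_eq_of_differentiable_on_annulus_off_countable one_pos hr.1.le
        Set.countable_empty (fun z hz => (hgdiff z (hsub hz)).continuousAt.continuousWithinAt)
        (fun z hz => ?_)
      refine hgdiff z (hsub ⟨Metric.ball_subset_closedBall hz.1.1, ?_⟩)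
      exact fun hb => hz.1.2 (Metric.ball_subset_closedBall hb)
    have hb : ‖(∮ z in C(0, r), g z)‖ ≤ 2 * π * r * (M * r ^ (-(k+1:ℤ))) := by
      refine circleIntegral.norm_integral_le_of_norm_le_const hr0.le (fun z hz => ?_)
      rw [mem_sphere_zero_iff_norm] at hz
      have hzA : z ∈ A := by
        constructor
        · rw [hz]; linarith [hr.1]
        · rw [hz]; exact hr.2
      rw [hg]
      simp only
      rw [norm_mul, norm_zpow, hz]
      have hfz : ‖f ((z + z⁻¹) / 2)‖ ≤ M := hM _ (hJkA z hzA)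
      exact mul_le_mul_of_nonneg_right hfz (zpow_nonneg hr0.le _)
    have h2J : ‖(∮ z in C(0, 1), g z)‖ = 2 * ‖J‖ := by
      rw [hI1, hKcos, hGsplit, norm_mul, norm_mul, Complex.norm_I, one_mul,
        Complex.norm_two]
    have hrpow : r ^ (-(k+1:ℤ)) * r = (r ^ k)⁻¹ := by
      rw [show r ^ (-(k+1:ℤ)) * r = r ^ (-(k+1:ℤ)) * r ^ (1:ℤ) by rw [zpow_one],
        ← zpow_add₀ hr0.ne', show (-(k+1:ℤ) + 1) = -(k:ℤ) by ring, zpow_neg, zpow_natCast]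
    have hb2 : 2 * ‖J‖ ≤ 2 * π * (M * (r ^ k)⁻¹) := by
      have hE : 2 * π * r * (M * r ^ (-(k+1:ℤ))) = 2 * π * (M * (r ^ k)⁻¹) := by
        rw [← hrpow]; ring
      rw [heq, h2J, hE] at hb
      exact hb
    have habs : ‖J‖ ≤ π * (M * (r ^ k)⁻¹) := by linarith
    rw [hak, abs_mul, abs_of_pos (by positivity : (0:ℝ) < 2 / π)]
    calc 2 / π * |J.re| ≤ 2 / π * ‖J‖ :=
          mul_le_mul_of_nonneg_left (Complex.abs_re_le_norm J) (by positivity)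
      _ ≤ 2 / π * (π * (M * (r ^ k)⁻¹)) := mul_le_mul_of_nonneg_left habs (by positivity)
      _ = 2 * M / r ^ k := by
          rw [div_mul_eq_mul_div, mul_comm]
          field_simp
  -- pass to the limit r → ρ⁻
  have hlim : Filter.Tendsto (fun r : ℝ => 2 * M / r ^ k) (nhdsWithin ρ (Set.Iio ρ))
      (nhds (2 * M / ρ ^ k)) := by
    apply Filter.Tendsto.mono_left ?_ nhdsWithin_le_nhds
    exact (continuousAt_const.div ((continuous_pow k).continuousAt)
      (pow_ne_zero k hρ0.ne')).tendsto
  refine ge_of_tendsto hlim ?_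
  filter_upwards [Ioo_mem_nhdsLT_of_mem (Set.mem_Ioc.2 ⟨hρ, le_rfl⟩)] with r hr
  exact key r hr
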